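/- The eigensequence of the Stirling transform satisfies, for every n ≥ 0: C_{n+2} = 1 + Σ_{k=0}^n C(n,k)·(Σ_{j=0}^k C_j·S^2_{k,j}), where S^2_{k,j} = Σ_{i=0}^k S(k,i)·S(i,j) are the entries of the square of the Stirling matrix of the second kind. -/

import Mathlib

/-- Stirling numbers of the second kind. -/
def S2 : ℕ → ℕ → ℕ
  | 0, 0 => 1
  | 0, _ + 1 => 0
  | _ + 1, 0 => 0
  | n + 1, m + 1 => (m + 1) * S2 n (m + 1) + S2 n m

lemma S2_eq_zero : ∀ n m, n < m → S2 n m = 0 := by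
  intro n
  induction n with
  | zero =>
    intro m hm
    cases m with
    | zero => omega
    | succ k => rfl
  | succ n ih =>
    intro m hm
    cases m with
    | zero => omega
    | succ k =>
      show (k + 1) * S2 n (k + 1) + S2 n k = 0
      rw [ih (k+1) (by omega), ih k (by omega)]; simp

lemma S2_one (n : ℕ) : S2 (n + 1) 1 = 1 := by
  induction n with
  | zero => rfl
  | succ n ih =>
    show 1 * S2 (n+1) 1 + S2 (n+1) 0 = 1
    rw [ih]; rfl

lemma S2_succ_succ (n m : ℕ) :
    S2 (n + 1) (m + 1) = ∑ i ∈ Finset.range (n + 1), n.choose i * S2 i m := by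
  induction n generalizing m with
  | zero =>
    rw [Finset.sum_range_one]
    show (m + 1) * S2 0 (m + 1) + S2 0 m = 1 * S2 0 m
    rw [S2_eq_zero 0 (m+1) (by omega)]; ring
  | succ n ih =>
    cases m with
    | zero =>
      show 1 * S2 (n+1) 1 + S2 (n+1) 0 = _
      rw [S2_one]
      have h : ∀ i ∈ Finset.range (n + 2), (n+1).choose i * S2 i 0 =
          if i = 0 then 1 else 0 := by
        intro i _
        cases i with
        | zero => rfl
        | succ k => simp [show S2 (k+1) 0 = 0 from rfl]
      rw [Finset.sum_congr rfl h, Finset.sum_ite_eq' (Finset.range (n+2)) 0 (fun _ => 1)]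
      simp [show S2 (n+1) 0 = 0 from rfl]
    | succ m =>
      have e0 : S2 0 (m+1) = 0 := rfl
      rw [Finset.sum_range_succ']
      have hsplit : ∀ i ∈ Finset.range (n+1),
          (n+1).choose (i+1) * S2 (i+1) (m+1) =
          n.choose i * ((m+1) * S2 i (m+1) + S2 i m) + n.choose (i+1) * S2 (i+1) (m+1) := by
        intro i _
        rw [Nat.choose_succ_succ, add_mul]; rfl
      rw [Finset.sum_congr rfl hsplit, Finset.sum_add_distrib]
      have hsecond : ∑ i ∈ Finset.range (n+1), n.choose (i+1) * S2 (i+1) (m+1)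
          = S2 (n+1) (m+2) := by
        have h1 : ∑ i ∈ Finset.range (n+2), n.choose i * S2 i (m+1)
            = ∑ i ∈ Finset.range (n+1), n.choose (i+1) * S2 (i+1) (m+1) := by
          rw [Finset.sum_range_succ']; simp [e0]
        have h2 : ∑ i ∈ Finset.range (n+2), n.choose i * S2 i (m+1)
            = ∑ i ∈ Finset.range (n+1), n.choose i * S2 i (m+1) := by
          rw [Finset.sum_range_succ]; simp [Nat.choose_succ_self]
        rw [← h1, h2, ← ih (m+1)]
      have hfirst : ∑ i ∈ Finset.range (n+1), n.choose i * ((m+1) * S2 i (m+1) + S2 i m)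
          = (m+1) * S2 (n+1) (m+2) + S2 (n+1) (m+1) := by
        rw [Finset.sum_congr rfl
          (fun i _ => show n.choose i * ((m+1) * S2 i (m+1) + S2 i m)
            = (m+1) * (n.choose i * S2 i (m+1)) + n.choose i * S2 i m by ring),
          Finset.sum_add_distrib, ← Finset.mul_sum, ← ih (m+1), ← ih m]
      rw [hsecond, hfirst]
      show (m+2) * S2 (n+1) (m+2) + S2 (n+1) (m+1) = _
      simp [e0]; ring

/-- Entries `S^p_{n,m}` of the `p`-th power of the Stirling matrix (for `p ≥ 1`;
the value at `p = 0` is junk). -/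
def Sp : ℕ → ℕ → ℕ → ℕ
  | 0, _, _ => 0
  | 1, n, m => S2 n m
  | p + 2, n, m => ∑ k ∈ Finset.range (n + 1), S2 n k * Sp (p + 1) k m

lemma Sp_two (k j : ℕ) : Sp 2 k j = ∑ i ∈ Finset.range (k + 1), S2 k i * S2 i j := by
  simp [Sp]

lemma S2_zero_right (i : ℕ) : ((S2 i 0 : ℕ) : ℝ) = if i = 0 then (1:ℝ) else 0 := by
  cases i <;> simp [S2]

/-- If `c` is the eigensequence of the Stirling transform, then
`C_{n+2} = 1 + ∑_{k=0}^n C(n,k) · ∑_{j=0}^k C_j · S²_{k,j}`, where `S²` is the square of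
the Stirling matrix of the second kind. -/
theorem eigensequence_via_stirling_square (c : ℕ → ℝ) (h0 : c 0 = 0) (h1 : c 1 = 1)
    (hrec : ∀ n, 1 ≤ n → c (n + 1) = ∑ k ∈ Finset.range (n + 1), c k * S2 n k) (n : ℕ) :
    c (n + 2) =
      1 + ∑ k ∈ Finset.range (n + 1),
          (n.choose k : ℝ) * ∑ j ∈ Finset.range (k + 1), c j * (Sp 2 k j : ℝ) := by
  have hc1 : ∀ m, c (m+1) = (if m = 0 then (1:ℝ) else 0)
      + ∑ l ∈ Finset.range (m+1), c l * (S2 m l : ℝ) := by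
    intro m
    cases m with
    | zero => simp [h1, h0]
    | succ m => rw [hrec (m+1) (by omega)]; simp
  have hinner : ∀ i, ∑ m ∈ Finset.range (i+1), c (m+1) * (S2 i m : ℝ)
      = (if i = 0 then (1:ℝ) else 0) + ∑ l ∈ Finset.range (i+1), c l * (Sp 2 i l : ℝ) := by
    intro i
    have step1 : ∀ m ∈ Finset.range (i+1), c (m+1) * (S2 i m : ℝ)
        = (if m = 0 then (S2 i m : ℝ) else 0)
          + ∑ l ∈ Finset.range (i+1), c l * (S2 m l : ℝ) * (S2 i m : ℝ) := by
      intro m hm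
      rw [hc1 m, add_mul]
      congr 1
      · split <;> simp
      · rw [Finset.sum_mul]
        apply Finset.sum_subset
        · exact Finset.range_subset_range.mpr (by simp at hm; omega)
        · intro l _ hl
          rw [S2_eq_zero m l (by simp at hl ⊢; omega)]
          simp
    rw [Finset.sum_congr rfl step1, Finset.sum_add_distrib]
    congr 1
    · rw [Finset.sum_ite_eq' (Finset.range (i+1)) 0]
      simp [S2_zero_right]
    · rw [Finset.sum_comm]
      refine Finset.sum_congr rfl fun l _ => ?_
      rw [Sp_two]
      push_cast
      rw [Finset.mul_sum]
      exact Finset.sum_congr rfl fun m _ => by ring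
  have hc : c (n+2) = ∑ m ∈ Finset.range (n+1), c (m+1) * (S2 (n+1) (m+1) : ℝ) := by
    rw [show n+2 = n+1+1 from rfl, hrec (n+1) (by omega), Finset.sum_range_succ']
    simp [h0]
  rw [hc]
  have hexp : ∀ m, ((S2 (n+1) (m+1) : ℕ) : ℝ)
      = ∑ i ∈ Finset.range (n+1), (n.choose i : ℝ) * (S2 i m : ℝ) := by
    intro m; rw [S2_succ_succ]; push_cast; rfl
  calc ∑ m ∈ Finset.range (n+1), c (m+1) * (S2 (n+1) (m+1) : ℝ)
      = ∑ m ∈ Finset.range (n+1), ∑ i ∈ Finset.range (n+1),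
          (n.choose i : ℝ) * (c (m+1) * (S2 i m : ℝ)) := by
        refine Finset.sum_congr rfl fun m _ => ?_
        rw [hexp, Finset.mul_sum]
        exact Finset.sum_congr rfl fun i _ => by ring
    _ = ∑ i ∈ Finset.range (n+1), (n.choose i : ℝ)
          * ∑ m ∈ Finset.range (n+1), c (m+1) * (S2 i m : ℝ) := by
        rw [Finset.sum_comm]
        exact Finset.sum_congr rfl fun i _ => by rw [Finset.mul_sum]
    _ = ∑ i ∈ Finset.range (n+1), (n.choose i : ℝ)
          * ((if i = 0 then (1:ℝ) else 0) + ∑ l ∈ Finset.range (i+1), c l * (Sp 2 i l : ℝ)) := by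
        refine Finset.sum_congr rfl fun i hi => ?_
        congr 1
        rw [← hinner i]
        refine (Finset.sum_subset (Finset.range_subset_range.mpr (by
            simp at hi; omega)) fun m _ hm => ?_).symm
        rw [S2_eq_zero i m (by simp at hm ⊢; omega)]
        simp
    _ = 1 + ∑ k ∈ Finset.range (n+1), (n.choose k : ℝ)
          * ∑ j ∈ Finset.range (k+1), c j * (Sp 2 k j : ℝ) := by
        rw [Finset.sum_congr rfl (fun i (_ : i ∈ Finset.range (n+1)) => mul_add (n.choose i : ℝ) _ _),
          Finset.sum_add_distrib]
        congr 1
        rw [Finset.sum_congr rfl (fun i (_ : i ∈ Finset.range (n+1)) =>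
          show (n.choose i : ℝ) * (if i = 0 then (1:ℝ) else 0)
            = if i = 0 then (n.choose i : ℝ) else 0 by split <;> simp)]
        rw [Finset.sum_ite_eq' (Finset.range (n+1)) 0]
        simp
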